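/- Let F be an 𝒳^op-module and X ∈ 𝒳. If F(X) has a minimal element, then X is an indecomposable left Λ-module. -/

import Mathlib

open CategoryTheory Limits

universe u

namespace Paper

/-- `𝒳` is a full additive subcategory of `Λ`-mod, closed under direct summands and
isomorphisms and containing the zero module, encoded as a predicate on `ModuleCat Λ`. -/
structure IsSubcat (Λ : Type u) [Ring Λ] (P : ModuleCat.{u} Λ → Prop) : Prop where
  fg : ∀ M, P M → Module.Finite Λ M
  zero_mem : P (ModuleCat.of Λ PUnit)
  iso_closed : ∀ {M N : ModuleCat.{u} Λ}, (M ≅ N) → P M → P N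
  sum_closed : ∀ {M N : ModuleCat.{u} Λ}, P M → P N → P (ModuleCat.of Λ (M × N))
  summand_closed : ∀ {M N : ModuleCat.{u} Λ}, P N →
    (∃ (i : M ⟶ N) (p : N ⟶ M), i ≫ p = 𝟙 M) → P M

/-- A subfunctor of an `Ab`-valued functor `F`. -/
structure Subfunctor {D : Type*} [Category D] (F : D ⥤ AddCommGrpCat.{u}) where
  pt : ∀ X : D, AddSubgroup (F.obj X)
  map_mem : ∀ {X Y : D} (f : X ⟶ Y) (x : F.obj X), x ∈ pt X → F.map f x ∈ pt Y

namespace Subfunctor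

variable {D : Type*} [Category D] {F : D ⥤ AddCommGrpCat.{u}}

/-- Containment of subfunctors. -/
def le (S T : Subfunctor F) : Prop := ∀ X, S.pt X ≤ T.pt X

/-- A subfunctor of `F` is finitely generated if it is generated by finitely
many elements. -/
def FG (S : Subfunctor F) : Prop :=
  ∃ (n : ℕ) (X : Fin n → D) (x : ∀ i, F.obj (X i)),
    (∀ i, x i ∈ S.pt (X i)) ∧ ∀ T : Subfunctor F, (∀ i, x i ∈ T.pt (X i)) → S.le T

/-- A subfunctor is noetherian if ascending chains of subfunctors below it stabilize. -/
def Noetherian (S : Subfunctor F) : Prop :=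
  ∀ c : ℕ → Subfunctor F, (∀ n, (c n).le S) → (∀ n, (c n).le (c (n + 1))) →
    ∃ n, ∀ k, n ≤ k → (c k).le (c n)

/-- A subfunctor is artinian if descending chains of subfunctors below it stabilize. -/
def Artinian (S : Subfunctor F) : Prop :=
  ∀ c : ℕ → Subfunctor F, (∀ n, (c n).le S) → (∀ n, (c (n + 1)).le (c n)) →
    ∃ n, ∀ k, n ≤ k → (c n).le (c k)

/-- A subfunctor is finite if it is both noetherian and artinian. -/
def Finite (S : Subfunctor F) : Prop := S.Noetherian ∧ S.Artinian

end Subfunctor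

/-- A functor is noetherian if its ascending chains of subfunctors stabilize. -/
def NoetherianFunctor {D : Type*} [Category D] (F : D ⥤ AddCommGrpCat.{u}) : Prop :=
  ∀ c : ℕ → Subfunctor F, (∀ n, (c n).le (c (n + 1))) → ∃ n, ∀ k, n ≤ k → (c k).le (c n)

/-- A functor is artinian if its descending chains of subfunctors stabilize. -/
def ArtinianFunctor {D : Type*} [Category D] (F : D ⥤ AddCommGrpCat.{u}) : Prop :=
  ∀ c : ℕ → Subfunctor F, (∀ n, (c (n + 1)).le (c n)) → ∃ n, ∀ k, n ≤ k → (c n).le (c k)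

/-- A functor is finite if it is both noetherian and artinian. -/
def FiniteFunctor {D : Type*} [Category D] (F : D ⥤ AddCommGrpCat.{u}) : Prop :=
  NoetherianFunctor F ∧ ArtinianFunctor F

/-- A functor is locally finite if every finitely generated subfunctor is finite. -/
def LocallyFiniteFunctor {D : Type*} [Category D] (F : D ⥤ AddCommGrpCat.{u}) : Prop :=
  ∀ S : Subfunctor F, S.FG → S.Finite

/-- The category of additive functors `D ⥤ Ab` is locally finite. -/
def ModLocallyFinite (D : Type*) [Category D] [Preadditive D] : Prop :=
  ∀ F : D ⥤ AddCommGrpCat.{u}, F.Additive → LocallyFiniteFunctor F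

/-- `x ∈ F(X)` is a minimal element of the `𝒳ᵒᵖ`-module `F` : `x ≠ 0` and `F(f)(x) = 0`
for every proper epimorphism `f : X → X'` in `𝒳`. -/
def IsMinimalElement {Λ : Type u} [Ring Λ] {P : ModuleCat.{u} Λ → Prop}
    (F : ObjectProperty.FullSubcategory P ⥤ AddCommGrpCat.{u}) (X : ObjectProperty.FullSubcategory P) (x : F.obj X) : Prop :=
  x ≠ 0 ∧ ∀ (X' : ObjectProperty.FullSubcategory P) (f : X ⟶ X'),
    Function.Surjective (show X.obj ⟶ X'.obj from f.hom) →
      ¬Function.Bijective (show X.obj ⟶ X'.obj from f.hom) → F.map f x = 0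

/-- If `F` is an `𝒳ᵒᵖ`-module and `F(X)` has a minimal element,
then `X` is an indecomposable `Λ`-module. -/
theorem statement1 {Λ : Type u} [Ring Λ] (P : ModuleCat.{u} Λ → Prop)
    (hsub : IsSubcat Λ P) (F : ObjectProperty.FullSubcategory P ⥤ AddCommGrpCat.{u}) (hF : F.Additive)
    (X : ObjectProperty.FullSubcategory P) (x : F.obj X) (hx : IsMinimalElement F X x) :
    Indecomposable X.obj := by
  haveI := hF
  obtain ⟨hne, hmin⟩ := hx
  constructor
  · intro hz
    have h1 : (𝟙 X : X ⟶ X) = 0 := ObjectProperty.hom_ext (h := hz.eq_of_src _ _)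
    have h2 : F.map (𝟙 X) x = 0 := by rw [h1, Functor.map_zero]; rfl
    rw [F.map_id] at h2
    exact hne h2
  · intro Y Z e
    by_contra hcon
    push_neg at hcon
    obtain ⟨hY, hZ⟩ := hcon
    have hy : ∃ y : Y, y ≠ 0 := by
      by_contra h; push_neg at h
      have : Subsingleton Y := ⟨fun a b => by rw [h a, h b]⟩
      exact hY (ModuleCat.isZero_of_subsingleton Y)
    have hz : ∃ z : Z, z ≠ 0 := by
      by_contra h; push_neg at h
      have : Subsingleton Z := ⟨fun a b => by rw [h a, h b]⟩
      exact hZ (ModuleCat.isZero_of_subsingleton Z)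
    -- module-level maps
    let p1 : X.obj ⟶ Y := e.hom ≫ biprod.fst
    let p2 : X.obj ⟶ Z := e.hom ≫ biprod.snd
    let i1 : Y ⟶ X.obj := biprod.inl ≫ e.inv
    let i2 : Z ⟶ X.obj := biprod.inr ≫ e.inv
    have hi1p1 : i1 ≫ p1 = 𝟙 Y := by simp [i1, p1]
    have hi2p2 : i2 ≫ p2 = 𝟙 Z := by simp [i2, p2]
    have hi2p1 : i2 ≫ p1 = 0 := by simp [i2, p1]
    have hi1p2 : i1 ≫ p2 = 0 := by simp [i1, p2]
    have hPY : P Y := hsub.summand_closed X.2 ⟨i1, p1, hi1p1⟩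
    have hPZ : P Z := hsub.summand_closed X.2 ⟨i2, p2, hi2p2⟩
    let XY : ObjectProperty.FullSubcategory P := ⟨Y, hPY⟩
    let XZ : ObjectProperty.FullSubcategory P := ⟨Z, hPZ⟩
    have hp1surj : Function.Surjective p1 := fun y =>
      ⟨i1 y, ConcreteCategory.congr_hom hi1p1 y⟩
    have hp2surj : Function.Surjective p2 := fun z =>
      ⟨i2 z, ConcreteCategory.congr_hom hi2p2 z⟩
    have hi1inj : Function.Injective i1 := by
      intro a b hab
      have h2 : p1 (i1 a) = p1 (i1 b) := congrArg p1 hab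
      rw [show p1 (i1 a) = a from ConcreteCategory.congr_hom hi1p1 a,
        show p1 (i1 b) = b from ConcreteCategory.congr_hom hi1p1 b] at h2
      exact h2
    have hi2inj : Function.Injective i2 := by
      intro a b hab
      have h2 : p2 (i2 a) = p2 (i2 b) := congrArg p2 hab
      rw [show p2 (i2 a) = a from ConcreteCategory.congr_hom hi2p2 a,
        show p2 (i2 b) = b from ConcreteCategory.congr_hom hi2p2 b] at h2
      exact h2
    have hp1nb : ¬Function.Bijective p1 := by
      rintro ⟨hinj, -⟩
      obtain ⟨z, hz0⟩ := hz
      have h0 : p1 (i2 z) = 0 := ConcreteCategory.congr_hom hi2p1 z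
      have h1 : i2 z = 0 := hinj (by rw [h0, map_zero])
      exact hz0 (hi2inj (by rw [h1, map_zero]))
    have hp2nb : ¬Function.Bijective p2 := by
      rintro ⟨hinj, -⟩
      obtain ⟨y, hy0⟩ := hy
      have h0 : p2 (i1 y) = 0 := ConcreteCategory.congr_hom hi1p2 y
      have h1 : i1 y = 0 := hinj (by rw [h0, map_zero])
      exact hy0 (hi1inj (by rw [h1, map_zero]))
    -- morphisms in the subcategory
    let f : X ⟶ XY := ObjectProperty.homMk p1
    let g : X ⟶ XZ := ObjectProperty.homMk p2
    let iY : XY ⟶ X := ObjectProperty.homMk i1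
    let iZ : XZ ⟶ X := ObjectProperty.homMk i2
    have hfx : F.map f x = 0 := hmin XY f hp1surj hp1nb
    have hgx : F.map g x = 0 := hmin XZ g hp2surj hp2nb
    have hsum : f ≫ iY + g ≫ iZ = 𝟙 X := by
      apply ObjectProperty.hom_ext
      show p1 ≫ i1 + p2 ≫ i2 = 𝟙 X.obj
      show (e.hom ≫ biprod.fst) ≫ (biprod.inl ≫ e.inv)
        + (e.hom ≫ biprod.snd) ≫ (biprod.inr ≫ e.inv) = 𝟙 X.obj
      simp only [Category.assoc]
      rw [← Preadditive.comp_add, ← Category.assoc biprod.fst, ← Category.assoc biprod.snd,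
        ← Preadditive.add_comp, biprod.total, Category.id_comp, e.hom_inv_id]
    have hzero : x = 0 := by
      have h1 : F.map (f ≫ iY + g ≫ iZ) x = x := by rw [hsum, F.map_id]; rfl
      rw [F.map_add, F.map_comp, F.map_comp] at h1
      rw [← h1]
      show F.map iY (F.map f x) + F.map iZ (F.map g x) = 0
      rw [hfx, hgx, map_zero, map_zero, add_zero]
    exact hne hzero

end Paper
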